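/- Let G be a multi-hypergraph (not necessarily uniform, parallel edges allowed) with a fixed edge ordering e_1, …, e_m in which each edge e_i has a designated leading vertex x_i ∈ e_i, and let w_G be the associated vertex weighting. If every vertex of G has degree at least δ, then w_G(v) ≥ δ for every vertex v of G. -/

import Mathlib

namespace HypergraphWeight

open scoped Classical

variable {V : Type*}

/-- The auxiliary directed graph `graph(G)` of a multi-hypergraph whose edges (with
designated leading vertices) are listed in `es`: there is a directed edge `a → b` iff
some edge `e_i` has leading vertex `x_i = a` and `b ∈ e_i \ {a}`. -/
def GraphRel (es : List (Finset V × V)) (a b : V) : Prop :=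
  ∃ p ∈ es, p.2 = a ∧ b ∈ p.1 ∧ b ≠ a

/-- There is a directed path (possibly empty) from `a` to `b` in `graph(G)`. -/
def ReachIn (es : List (Finset V × V)) (a b : V) : Prop :=
  Relation.ReflTransGen (GraphRel es) a b

/-- Auxiliary weight function: the input list holds the edges (each paired with its
leading vertex) in *reverse* order (most recent edge `e_i` first).  Adding the edge
`e_i` with leading vertex `x_i` increases the weight of `x_i` by one and raises the
weight of every vertex reachable from `x_i` in `graph(G_i)` to at least the new weight
of `x_i`. -/
noncomputable def weightAux : List (Finset V × V) → V → ℕ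
  | [], _ => 0
  | (e, x) :: es, v =>
      if v = x then weightAux es x + 1
      else if ReachIn ((e, x) :: es) x v then max (weightAux es x + 1) (weightAux es v)
      else weightAux es v

/-- The weight function `w_G` associated to a multi-hypergraph given by its edge list
`es = [e_1, …, e_m]` (in this order), each edge carrying a designated leading vertex. -/
noncomputable def weight (es : List (Finset V × V)) : V → ℕ := weightAux es.reverse

/-- The degree of `v` in the multi-hypergraph with edge list `es`. -/
noncomputable def degree (es : List (Finset V × V)) (v : V) : ℕ :=
  (es.filter fun p => decide (v ∈ p.1)).length


lemma graphRel_mono {q : Finset V × V} {L : List (Finset V × V)} {a b : V}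
    (h : GraphRel L a b) : GraphRel (q :: L) a b := by
  obtain ⟨p, hp, h⟩ := h
  exact ⟨p, List.mem_cons_of_mem _ hp, h⟩

lemma reachIn_mono {q : Finset V × V} {L : List (Finset V × V)} {a b : V}
    (h : ReachIn L a b) : ReachIn (q :: L) a b :=
  Relation.ReflTransGen.mono (fun _ _ => graphRel_mono) _ _ h

lemma reachIn_cons_split {e : Finset V} {x : V} {L : List (Finset V × V)} {a b : V}
    (h : ReachIn ((e, x) :: L) a b) : ReachIn L a b ∨ ReachIn L a x := by
  induction h with
  | refl => exact Or.inl Relation.ReflTransGen.refl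
  | tail _ hrel ih =>
      rename_i c d _
      obtain ⟨p, hp, hpc, hdp, hdc⟩ := hrel
      rcases List.mem_cons.1 hp with hph | hpL
      · -- the step uses the new edge, so its source is x
        have hcx : c = x := by rw [hph] at hpc; exact hpc.symm
        rcases ih with h1 | h2
        · exact Or.inr (hcx ▸ h1)
        · exact Or.inr h2
      · rcases ih with h1 | h2
        · exact Or.inl (h1.tail ⟨p, hpL, hpc, hdp, hdc⟩)
        · exact Or.inr h2

lemma degree_cons (e : Finset V) (x : V) (L : List (Finset V × V)) (u : V) :
    degree ((e, x) :: L) u = (if u ∈ e then 1 else 0) + degree L u := by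
  simp [degree, List.filter_cons]
  split <;> simp [Nat.add_comm]

/-- Main invariant: every vertex `v` is reached by some vertex whose degree
is at most the weight of `v`. -/
lemma exists_reach_degree_le (L : List (Finset V × V)) (v : V) :
    ∃ u, ReachIn L u v ∧ degree L u ≤ weightAux L v := by
  induction L generalizing v with
  | nil =>
      exact ⟨v, Relation.ReflTransGen.refl, by simp [degree, weightAux]⟩
  | cons q L ih =>
      obtain ⟨e, x⟩ := q
      by_cases hvx : v = x
      · subst hvx
        obtain ⟨u, hu, hd⟩ := ih v
        refine ⟨u, reachIn_mono hu, ?_⟩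
        rw [degree_cons]
        have : weightAux ((e, v) :: L) v = weightAux L v + 1 := by
          simp [weightAux]
        rw [this]
        split <;> omega
      · by_cases hreach : ReachIn ((e, x) :: L) x v
        · obtain ⟨u, hu, hd⟩ := ih x
          refine ⟨u, Relation.ReflTransGen.trans (reachIn_mono hu) hreach, ?_⟩
          have hw : weightAux ((e, x) :: L) v
              = max (weightAux L x + 1) (weightAux L v) := by
            simp [weightAux, hvx, hreach]
          rw [hw, degree_cons]
          have := le_max_left (weightAux L x + 1) (weightAux L v)
          split <;> omega
        · obtain ⟨u, hu, hd⟩ := ih v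
          have hue : u ∉ e := by
            intro hue
            by_cases hux : u = x
            · exact hreach (reachIn_mono (hux ▸ hu))
            · have hstep : GraphRel ((e, x) :: L) x u :=
                ⟨(e, x), List.mem_cons_self, rfl, hue, hux⟩
              exact hreach (Relation.ReflTransGen.trans
                (Relation.ReflTransGen.single hstep) (reachIn_mono hu))
          refine ⟨u, reachIn_mono hu, ?_⟩
          have hw : weightAux ((e, x) :: L) v = weightAux L v := by
            simp [weightAux, hvx, hreach]
          rw [hw, degree_cons, if_neg hue]
          omega

lemma degree_reverse (es : List (Finset V × V)) (u : V) :
    degree es.reverse u = degree es u := by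
  simp only [degree, List.filter_reverse, List.length_reverse]

end HypergraphWeight

open HypergraphWeight in
/-- **Lemma 15.** Let `G` be a multi-hypergraph (not necessarily uniform, parallel edges
allowed) with ordered edge list `es`, each edge carrying a designated leading vertex
belonging to it.  If every vertex of `G` has degree at least `δ`, then `w_G(v) ≥ δ` for
every vertex `v`. -/
theorem hypergraph_weight_ge_of_min_degree {V : Type*} (es : List (Finset V × V))
    (hlead : ∀ p ∈ es, p.2 ∈ p.1) (δ : ℕ)
    (hdeg : ∀ v : V, δ ≤ degree es v) :
    ∀ v : V, δ ≤ weight es v := by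
  intro v
  obtain ⟨u, _, hd⟩ := exists_reach_degree_le es.reverse v
  calc δ ≤ degree es u := hdeg u
    _ = degree es.reverse u := (degree_reverse es u).symm
    _ ≤ weightAux es.reverse v := hd
    _ = weight es v := rfl
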